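/- Let A, B be n×n Hermitian matrices with A - zB a regular pencil. Then the number of zero eigenvalues of the pencil satisfies n₀(A,B) ≥ n₀(A) − n₀(B), and the number of infinite eigenvalues satisfies n_∞(A,B) ≥ n₀(B) − n₀(A). -/

import Mathlib

open Polynomial Matrix
open scoped ComplexOrder

noncomputable def pencil {n : ℕ} (A B : Matrix (Fin n) (Fin n) ℂ) : Polynomial ℂ :=
  (A.map (fun a => Polynomial.C a) - (Polynomial.X : Polynomial ℂ) • B.map (fun a => Polynomial.C a)).det

noncomputable def nPos {n : ℕ} {A : Matrix (Fin n) (Fin n) ℂ} (hA : A.IsHermitian) : ℕ :=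
  (Finset.univ.filter fun i => 0 < hA.eigenvalues i).card

noncomputable def nZero {n : ℕ} {A : Matrix (Fin n) (Fin n) ℂ} (hA : A.IsHermitian) : ℕ :=
  (Finset.univ.filter fun i => hA.eigenvalues i = 0).card

noncomputable def nNeg {n : ℕ} {A : Matrix (Fin n) (Fin n) ℂ} (hA : A.IsHermitian) : ℕ :=
  (Finset.univ.filter fun i => hA.eigenvalues i < 0).card

noncomputable def pencilPosCount {n : ℕ} (A B : Matrix (Fin n) (Fin n) ℂ) : ℕ :=
  ((pencil A B).roots.filter fun z => z.im = 0 ∧ 0 < z.re).card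

noncomputable def pencilNegCount {n : ℕ} (A B : Matrix (Fin n) (Fin n) ℂ) : ℕ :=
  ((pencil A B).roots.filter fun z => z.im = 0 ∧ z.re < 0).card

noncomputable def pencilRealCount {n : ℕ} (A B : Matrix (Fin n) (Fin n) ℂ) : ℕ :=
  ((pencil A B).roots.filter fun z => z.im = 0).card

noncomputable def pencilComplexCount {n : ℕ} (A B : Matrix (Fin n) (Fin n) ℂ) : ℕ :=
  ((pencil A B).roots.filter fun z => z.im ≠ 0).card

lemma pow_dvd_det {n : ℕ} (M : Matrix (Fin n) (Fin n) (Polynomial ℂ)) (S : Finset (Fin n))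
    (h : ∀ j ∈ S, ∀ i, (X : Polynomial ℂ) ∣ M i j) :
    (X : Polynomial ℂ) ^ S.card ∣ M.det := by
  rw [Matrix.det_apply]
  refine Finset.dvd_sum fun σ _ => ?_
  have h1 : (X : ℂ[X]) ^ S.card ∣ ∏ i, M (σ i) i := by
    have : (X : ℂ[X]) ^ S.card = ∏ j ∈ S, (X : ℂ[X]) := by rw [Finset.prod_const]
    rw [this]
    exact dvd_trans (Finset.prod_dvd_prod_of_dvd (fun _ => (X : Polynomial ℂ)) (fun j => M (σ j) j) (fun j hj => h j hj (σ j)))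
      (Finset.prod_dvd_prod_of_subset S Finset.univ _ (Finset.subset_univ S))
  rcases Int.units_eq_one_or (Equiv.Perm.sign σ) with hs | hs <;> simp [hs, h1, (h1.neg_right)]

lemma natDegree_det_le_sum {n : ℕ} (M : Matrix (Fin n) (Fin n) (Polynomial ℂ)) (d : Fin n → ℕ)
    (h : ∀ i j, (M i j).natDegree ≤ d j) : M.det.natDegree ≤ ∑ j, d j := by
  rw [Matrix.det_apply]
  refine natDegree_sum_le_of_forall_le _ _ fun σ _ => ?_
  have h2 : (∏ i, M (σ i) i).natDegree ≤ ∑ j, d j :=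
    le_trans (natDegree_prod_le _ _) (Finset.sum_le_sum fun i _ => h (σ i) i)
  rcases Int.units_eq_one_or (Equiv.Perm.sign σ) with hs | hs <;>
    simpa [hs] using h2

lemma pencil_conj {n : ℕ} (A B U : Matrix (Fin n) (Fin n) ℂ)
    (hU : star U * U = 1) :
    pencil (star U * A * U) (star U * B * U) = pencil A B := by
  unfold pencil
  have hmap : ∀ M N : Matrix (Fin n) (Fin n) ℂ,
      (M * N).map (fun a => (Polynomial.C a : Polynomial ℂ))
        = M.map (fun a => Polynomial.C a) * N.map (fun a => Polynomial.C a) := fun M N =>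
    Matrix.map_mul (f := (Polynomial.C : ℂ →+* Polynomial ℂ))
  rw [hmap, hmap, hmap, hmap]
  set Sm := (star U).map (fun a => (Polynomial.C a : Polynomial ℂ))
  set Um := U.map (fun a => (Polynomial.C a : Polynomial ℂ))
  set Am := A.map (fun a => (Polynomial.C a : Polynomial ℂ))
  set Bm := B.map (fun a => (Polynomial.C a : Polynomial ℂ))
  have key : Sm * Am * Um - (X : Polynomial ℂ) • (Sm * Bm * Um) = Sm * (Am - (X : Polynomial ℂ) • Bm) * Um := by
    rw [Matrix.mul_sub, Matrix.sub_mul, Matrix.mul_smul, Matrix.smul_mul]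
  rw [key, Matrix.det_mul, Matrix.det_mul]
  have hdetS : Sm.det = Polynomial.C (star U).det := ((Polynomial.C : ℂ →+* ℂ[X]).map_det _).symm
  have hdetU : Um.det = Polynomial.C U.det := ((Polynomial.C : ℂ →+* ℂ[X]).map_det _).symm
  have : Sm.det * Um.det = 1 := by
    rw [hdetS, hdetU, ← Polynomial.C_mul, ← Matrix.det_mul, hU, Matrix.det_one, Polynomial.C_1]
  calc Sm.det * (Am - (X : Polynomial ℂ) • Bm).det * Um.det
      = (Sm.det * Um.det) * (Am - X • Bm).det := by ring
    _ = (Am - (X : Polynomial ℂ) • Bm).det := by rw [this, one_mul]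

lemma nZero_le_rootMultiplicity {n : ℕ} (A B : Matrix (Fin n) (Fin n) ℂ)
    (hA : A.IsHermitian) (hreg : pencil A B ≠ 0) :
    nZero hA ≤ (pencil A B).rootMultiplicity 0 := by
  rw [Polynomial.le_rootMultiplicity_iff hreg, map_zero, sub_zero]
  set U : Matrix (Fin n) (Fin n) ℂ := (hA.eigenvectorUnitary : Matrix (Fin n) (Fin n) ℂ)
  have hU : star U * U = 1 := Unitary.coe_star_mul_self hA.eigenvectorUnitary
  have hD : star U * A * U = Matrix.diagonal (RCLike.ofReal ∘ hA.eigenvalues) := by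
    have hU' : U * star U = 1 := Unitary.coe_mul_star_self hA.eigenvectorUnitary
    conv_lhs => rw [hA.spectral_theorem, Unitary.conjStarAlgAut_apply]
    change star U * (U * _ * star U) * U = _
    simp only [mul_assoc, hU, mul_one]
    rw [← mul_assoc, hU, one_mul]
  have hp : pencil A B = pencil (Matrix.diagonal (RCLike.ofReal ∘ hA.eigenvalues))
      (star U * B * U) := by rw [← hD, pencil_conj A B U hU]
  rw [hp]
  unfold pencil nZero
  apply pow_dvd_det
  intro j hj i
  simp only [Finset.mem_filter] at hj
  have hz : (Matrix.diagonal (RCLike.ofReal ∘ hA.eigenvalues) : Matrix (Fin n) (Fin n) ℂ) i j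
      = 0 := by
    rcases eq_or_ne i j with hij | hij
    · subst hij
      simp [Matrix.diagonal_apply_eq, hj.2]
    · simp [Matrix.diagonal_apply_ne _ hij]
  simp only [Matrix.sub_apply, Matrix.smul_apply, Matrix.map_apply, hz, map_zero, smul_eq_mul,
    zero_sub, dvd_neg]
  exact dvd_mul_right _ _

lemma natDegree_pencil_le {n : ℕ} (A B : Matrix (Fin n) (Fin n) ℂ)
    (hB : B.IsHermitian) :
    (pencil A B).natDegree + nZero hB ≤ n := by
  set U : Matrix (Fin n) (Fin n) ℂ := (hB.eigenvectorUnitary : Matrix (Fin n) (Fin n) ℂ)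
  have hU : star U * U = 1 := Unitary.coe_star_mul_self hB.eigenvectorUnitary
  have hD : star U * B * U = Matrix.diagonal (RCLike.ofReal ∘ hB.eigenvalues) := by
    have hU' : U * star U = 1 := Unitary.coe_mul_star_self hB.eigenvectorUnitary
    conv_lhs => rw [hB.spectral_theorem, Unitary.conjStarAlgAut_apply]
    change star U * (U * _ * star U) * U = _
    simp only [mul_assoc, hU, mul_one]
    rw [← mul_assoc, hU, one_mul]
  have hp : pencil A B = pencil (star U * A * U)
      (Matrix.diagonal (RCLike.ofReal ∘ hB.eigenvalues)) := by
    rw [← hD, pencil_conj A B U hU]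
  have hdeg : (pencil A B).natDegree ≤
      ∑ j, (if hB.eigenvalues j = 0 then 0 else 1) := by
    rw [hp]
    unfold pencil
    apply natDegree_det_le_sum
    intro i j
    by_cases hj : hB.eigenvalues j = 0
    · have hz : (Matrix.diagonal (RCLike.ofReal ∘ hB.eigenvalues) : Matrix (Fin n) (Fin n) ℂ) i j
          = 0 := by
        rcases eq_or_ne i j with hij | hij
        · subst hij
          simp [Matrix.diagonal_apply_eq, hj]
        · simp [Matrix.diagonal_apply_ne _ hij]
      simp only [Matrix.sub_apply, Matrix.smul_apply, Matrix.map_apply, hz, map_zero,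
        smul_eq_mul, mul_zero, sub_zero, natDegree_C, hj, if_true]
      exact le_rfl
    · simp only [hj, if_false, Matrix.sub_apply, Matrix.smul_apply, Matrix.map_apply, smul_eq_mul]
      refine le_trans (natDegree_sub_le _ _) ?_
      simp only [natDegree_C, max_le_iff]
      exact ⟨Nat.zero_le _, le_trans natDegree_mul_le (by simp)⟩
  have hsum : ∑ j, (if hB.eigenvalues j = 0 then 0 else 1) = n - nZero hB := by
    unfold nZero
    rw [Finset.sum_ite, Finset.sum_const, Finset.sum_const]
    have := Finset.card_filter_add_card_filter_not
      (s := (Finset.univ : Finset (Fin n))) (p := fun i => hB.eigenvalues i = 0)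
    simp only [Finset.card_univ, Fintype.card_fin] at this
    simp only [smul_eq_mul, mul_zero, mul_one, zero_add]
    omega
  have hnz : nZero hB ≤ n := by
    unfold nZero
    calc _ ≤ (Finset.univ : Finset (Fin n)).card := Finset.card_filter_le _ _
      _ = n := by simp
  omega

theorem stmt6 {n : ℕ} (A B : Matrix (Fin n) (Fin n) ℂ)
    (hA : A.IsHermitian) (hB : B.IsHermitian) (hreg : pencil A B ≠ 0) :
    nZero hA ≤ (pencil A B).rootMultiplicity 0 + nZero hB ∧
    nZero hB ≤ (n - (pencil A B).natDegree) + nZero hA := by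
  have h1 := nZero_le_rootMultiplicity A B hA hreg
  have h2 := natDegree_pencil_le A B hB
  omega
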